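/- Let S be a finite nonempty set and f : S → ZMod 2. Define the Deutsch–Jozsa amplitude A = (1 / |S|) · ∑_{s ∈ S} (-1 : ℂ)^{(f s).val}. Then: (i) if f is constant, |A| = 1, so the Deutsch–Jozsa measurement of the query register in the uniform superposition state succeeds with probability |A|² = 1; (ii) if f is balanced, i.e. the sets {s | f s = 0} and {s | f s = 1} have equal cardinality, then A = 0, so the measurement succeeds with probability 0. -/

import Mathlib

open BigOperators

theorem stmt11 {S : Type*} [Fintype S] [Nonempty S] (f : S → ZMod 2) :
    ((∀ s s' : S, f s = f s') →
      ‖(1 / (Fintype.card S : ℂ)) * ∑ s : S, (-1 : ℂ) ^ (f s).val‖ = 1) ∧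
    ((Finset.univ.filter (fun s : S => f s = 0)).card
        = (Finset.univ.filter (fun s : S => f s = 1)).card →
      (1 / (Fintype.card S : ℂ)) * ∑ s : S, (-1 : ℂ) ^ (f s).val = 0) := by
  have hcard : (Fintype.card S : ℂ) ≠ 0 := by
    exact_mod_cast Nat.cast_ne_zero.mpr Fintype.card_ne_zero
  constructor
  · intro h
    obtain ⟨s0⟩ := ‹Nonempty S›
    have hsum : ∑ s : S, (-1 : ℂ) ^ (f s).val = Fintype.card S * (-1 : ℂ) ^ (f s0).val := by
      rw [Finset.sum_congr rfl (fun s _ => by rw [h s s0])]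
      simp [Finset.sum_const, Finset.card_univ]
    rw [hsum, one_div, ← mul_assoc, inv_mul_cancel₀ hcard, one_mul]
    rw [norm_pow]
    simp
  · intro h
    classical
    have hsplit : ∑ s : S, (-1 : ℂ) ^ (f s).val
        = ∑ s ∈ Finset.univ.filter (fun s : S => f s = 0), (-1 : ℂ) ^ (f s).val
        + ∑ s ∈ Finset.univ.filter (fun s : S => f s = 1), (-1 : ℂ) ^ (f s).val := by
      rw [← Finset.sum_filter_add_sum_filter_not Finset.univ (fun s => f s = 0)]
      congr 1
      apply Finset.sum_congr _ (fun _ _ => rfl)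
      apply Finset.filter_congr
      intro s _
      have : ∀ x : ZMod 2, ¬x = 0 ↔ x = 1 := by decide
      exact this (f s)
    have h0 : ∀ s ∈ Finset.univ.filter (fun s : S => f s = 0), (-1 : ℂ) ^ (f s).val = 1 := by
      intro s hs
      simp only [Finset.mem_filter] at hs
      rw [hs.2]; rfl
    have h1 : ∀ s ∈ Finset.univ.filter (fun s : S => f s = 1), (-1 : ℂ) ^ (f s).val = -1 := by
      intro s hs
      simp only [Finset.mem_filter] at hs
      rw [hs.2]
      norm_num [ZMod.val_one]
    rw [hsplit, Finset.sum_congr rfl h0, Finset.sum_congr rfl h1]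
    simp [Finset.sum_const, h]
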